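/- Let c, x₄ ∈ ℂ with c ≠ 0, c³ ≠ 1, c³ ≠ −8. Set X = [[−x₄, 0], [0, x₄]], Y = [[0, 0], [1, 0]], and Z = [[0, −c·x₄²], [0, 0]] in Mat₂(ℂ). Then (X, Y, Z) is a matrix solution for S(1,1,c), and it is irreducible if and only if x₄ ≠ 0. -/

import Mathlib

open Matrix

/-- The subalgebra of 2×2 matrices with vanishing (0,1) entry. -/
def upperZero : Subalgebra ℂ (Matrix (Fin 2) (Fin 2) ℂ) where
  carrier := {M | M 0 1 = 0}
  add_mem' := by intro a b ha hb; simp_all [Matrix.add_apply]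
  mul_mem' := by
    intro a b ha hb
    simp only [Set.mem_setOf_eq, Matrix.mul_apply, Fin.sum_univ_two] at *
    simp [ha, hb]
  algebraMap_mem' := by intro r; simp [Matrix.algebraMap_matrix_apply]

/-- The second representative family of Table 4 (two-Jordan-block case,
normalized with y₃ = 1): a matrix solution of S(1,1,c), irreducible iff x₄ ≠ 0. -/
theorem table4_family2_solution_irreducible_iff
    (c x₄ : ℂ) (hc0 : c ≠ 0) (hc1 : c ^ 3 ≠ 1) (hc8 : c ^ 3 ≠ -8) :
    let X : Matrix (Fin 2) (Fin 2) ℂ := !![-x₄, 0; 0, x₄]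
    let Y : Matrix (Fin 2) (Fin 2) ℂ := !![0, 0; 1, 0]
    let Z : Matrix (Fin 2) (Fin 2) ℂ := !![0, -(c * x₄ ^ 2); 0, 0]
    (Y * Z + Z * Y + c • (X * X) = 0 ∧
     Z * X + X * Z + c • (Y * Y) = 0 ∧
     X * Y + Y * X + c • (Z * Z) = 0) ∧
    (Algebra.adjoin ℂ {X, Y, Z} = ⊤ ↔ x₄ ≠ 0) := by
  intro X Y Z
  constructor
  · refine ⟨?_, ?_, ?_⟩ <;>
    · show _ = (0 : Matrix (Fin 2) (Fin 2) ℂ)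
      ext i j
      fin_cases i <;> fin_cases j <;>
        simp [X, Y, Z, Matrix.mul_apply, Fin.sum_univ_two] <;> ring
  · constructor
    · intro htop hx4
      have hX : X = !![0, 0; 0, 0] := by simp [X, hx4]
      have hZ : Z = !![0, 0; 0, 0] := by simp [Z, hx4]
      have hsub : Algebra.adjoin ℂ {X, Y, Z} ≤ upperZero := by
        apply Algebra.adjoin_le
        intro M hM
        rcases hM with h | h | h <;> subst h
        · show X 0 1 = 0; simp [X]
        · show Y 0 1 = 0; simp [Y]
        · show Z 0 1 = 0; simp [Z, hx4]
      rw [htop] at hsub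
      have : (!![0, 1; 0, 0] : Matrix (Fin 2) (Fin 2) ℂ) ∈ upperZero :=
        hsub Algebra.mem_top
      exact (one_ne_zero (α := ℂ)) (by simpa using (show (!![0,1;0,0] : Matrix (Fin 2) (Fin 2) ℂ) 0 1 = 0 from this))
    · intro hx4
      set A := Algebra.adjoin ℂ ({X, Y, Z} : Set (Matrix (Fin 2) (Fin 2) ℂ)) with hA
      have hY : Y ∈ A := Algebra.subset_adjoin (by simp)
      have hZ : Z ∈ A := Algebra.subset_adjoin (by simp)
      have hd : -(c * x₄ ^ 2) ≠ 0 := by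
        simp only [neg_ne_zero]
        exact mul_ne_zero hc0 (pow_ne_zero _ hx4)
      have hE12 : (!![0, 1; 0, 0] : Matrix (Fin 2) (Fin 2) ℂ) ∈ A := by
        have := A.smul_mem hZ (-(c * x₄ ^ 2))⁻¹
        have heq : (-(c * x₄ ^ 2))⁻¹ • Z = !![0, 1; 0, 0] := by
          ext i j
          fin_cases i <;> fin_cases j <;>
            simp [Z, Matrix.smul_apply, inv_mul_cancel₀ hd] <;> field_simp
        rwa [heq] at this
      have hE21 : (!![0, 0; 1, 0] : Matrix (Fin 2) (Fin 2) ℂ) ∈ A := hY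
      have hE11 : (!![1, 0; 0, 0] : Matrix (Fin 2) (Fin 2) ℂ) ∈ A := by
        have := A.mul_mem hE12 hE21
        have heq : (!![0, 1; 0, 0] : Matrix (Fin 2) (Fin 2) ℂ) * !![0, 0; 1, 0]
            = !![1, 0; 0, 0] := by
          ext i j
          fin_cases i <;> fin_cases j <;> simp [Matrix.mul_apply, Fin.sum_univ_two]
        rwa [heq] at this
      have hE22 : (!![0, 0; 0, 1] : Matrix (Fin 2) (Fin 2) ℂ) ∈ A := by
        have := A.mul_mem hE21 hE12
        have heq : (!![0, 0; 1, 0] : Matrix (Fin 2) (Fin 2) ℂ) * !![0, 1; 0, 0]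
            = !![0, 0; 0, 1] := by
          ext i j
          fin_cases i <;> fin_cases j <;> simp [Matrix.mul_apply, Fin.sum_univ_two]
        rwa [heq] at this
      rw [eq_top_iff]
      intro M _
      have hM : M = M 0 0 • !![1, 0; 0, 0] + M 0 1 • !![0, 1; 0, 0]
          + M 1 0 • !![0, 0; 1, 0] + M 1 1 • !![0, 0; 0, 1] := by
        ext i j
        fin_cases i <;> fin_cases j <;> simp [Matrix.add_apply, Matrix.smul_apply]
      rw [hM]
      exact A.add_mem (A.add_mem (A.add_mem (A.smul_mem hE11 _) (A.smul_mem hE12 _))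
        (A.smul_mem hE21 _)) (A.smul_mem hE22 _)
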